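/- arXiv:1101.1687 — 4 statements merged into one kernel-verified Lean document; each statement's English description precedes it below -/
import Mathlib

section
/- Let V be a finite-dimensional vector space over ℂ, Γ a linearly ordered set, and v : V∖{0} → Γ a pre-valuation with one-dimensional leaves. Then there exists a ℂ-vector-space basis B of V such that the values v(b), b ∈ B, are pairwise distinct (i.e., v restricted to B is injective). -/
section Aux

variable {V : Type*} [AddCommGroup V] [Module ℂ V]
    {Γ : Type*} [LinearOrder Γ] {v : V → Γ}

lemma preval_neg (hv_smul : ∀ (c : ℂ) (f : V), c ≠ 0 → f ≠ 0 → v (c • f) = v f)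
    {x : V} (hx : x ≠ 0) : v (-x) = v x := by
  have := hv_smul (-1) x (by norm_num) hx
  simpa using this

lemma preval_add_of_ne
    (hv_add : ∀ f g : V, f ≠ 0 → g ≠ 0 → f + g ≠ 0 → min (v f) (v g) ≤ v (f + g))
    (hv_smul : ∀ (c : ℂ) (f : V), c ≠ 0 → f ≠ 0 → v (c • f) = v f)
    {x y : V} (hx : x ≠ 0) (hy : y ≠ 0) (hne : v x ≠ v y) :
    x + y ≠ 0 ∧ v (x + y) = min (v x) (v y) := by
  have hxy : x + y ≠ 0 := by
    intro h
    have hyx : y = -x := by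
      have : y = -x + (x + y) := by abel
      rw [h, add_zero] at this; exact this
    rw [hyx, preval_neg hv_smul hx] at hne
    exact hne rfl
  refine ⟨hxy, ?_⟩
  have key : ∀ a b : V, a ≠ 0 → b ≠ 0 → a + b ≠ 0 → v a < v b → v (a + b) = v a := by
    intro a b ha hb hab hlt
    have h1 : v a ≤ v (a + b) := by
      have := hv_add a b ha hb hab
      rwa [min_eq_left hlt.le] at this
    have h2 : v (a + b) ≤ v a := by
      have h3 := hv_add (a + b) (-b) hab (neg_ne_zero.mpr hb) (by simpa using ha)
      have h4 : (a + b) + -b = a := by abel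
      rw [h4, preval_neg hv_smul hb] at h3
      rcases min_le_iff.mp h3 with h | h
      · exact h
      · exact absurd h (not_le.mpr hlt)
    exact le_antisymm h2 h1
  rcases lt_or_gt_of_ne hne with h | h
  · rw [min_eq_left h.le]; exact key x y hx hy hxy h
  · rw [min_eq_right h.le, add_comm]
    exact key y x hy hx (by rwa [add_comm]) h

/-- A finite sum of nonzero vectors with pairwise distinct values is nonzero,
and its value is one of the values. -/
lemma preval_sum_ne_zero
    (hv_add : ∀ f g : V, f ≠ 0 → g ≠ 0 → f + g ≠ 0 → min (v f) (v g) ≤ v (f + g))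
    (hv_smul : ∀ (c : ℂ) (f : V), c ≠ 0 → f ≠ 0 → v (c • f) = v f)
    {ι : Type*} (g : ι → V) (t : Finset ι) (ht : t.Nonempty)
    (hg : ∀ i ∈ t, g i ≠ 0) (hinj : Set.InjOn (v ∘ g) t) :
    (∑ i ∈ t, g i) ≠ 0 ∧ ∃ i ∈ t, v (∑ i ∈ t, g i) = v (g i) := by
  induction ht using Finset.Nonempty.cons_induction with
  | singleton a => simpa using hg a (by simp)
  | cons a s has hs ih =>
    have hga : g a ≠ 0 := hg a (by simp)
    have hg' : ∀ i ∈ s, g i ≠ 0 := fun i hi => hg i (by simp [hi])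
    have hinj' : Set.InjOn (v ∘ g) s := fun x hx y hy h =>
      hinj (by simp [hx]) (by simp [hy]) h
    obtain ⟨hS, i, hi, hvi⟩ := ih hg' hinj'
    have hne : v (g a) ≠ v (∑ i ∈ s, g i) := by
      rw [hvi]
      intro h
      have : a = i := hinj (by simp) (by simp [hi]) h
      exact has (this ▸ hi)
    obtain ⟨hsum, heq⟩ := preval_add_of_ne hv_add hv_smul hga hS hne
    rw [Finset.sum_cons]
    refine ⟨hsum, ?_⟩
    rcases min_cases (v (g a)) (v (∑ i ∈ s, g i)) with ⟨h, _⟩ | ⟨h, _⟩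
    · exact ⟨a, by simp, by rw [heq, h]⟩
    · exact ⟨i, by simp [hi], by rw [heq, h, hvi]⟩

/-- Nonzero vectors with pairwise distinct values are linearly independent. -/
lemma preval_linearIndependent
    (hv_add : ∀ f g : V, f ≠ 0 → g ≠ 0 → f + g ≠ 0 → min (v f) (v g) ≤ v (f + g))
    (hv_smul : ∀ (c : ℂ) (f : V), c ≠ 0 → f ≠ 0 → v (c • f) = v f)
    {ι : Type*} (f : ι → V) (hf : ∀ i, f i ≠ 0)
    (hinj : Function.Injective (v ∘ f)) : LinearIndependent ℂ f := by
  rw [linearIndependent_iff']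
  intro s c hsum i hi
  by_contra hci
  classical
  set t := s.filter (fun j => c j ≠ 0) with ht
  have htne : t.Nonempty := ⟨i, by simp [ht, hi, hci]⟩
  have hsum' : ∑ j ∈ t, c j • f j = 0 := by
    rw [ht, Finset.sum_filter_of_ne]
    · exact hsum
    · intro j hj hne hc
      exact hne (by rw [hc, zero_smul])
  have hgz : ∀ j ∈ t, c j • f j ≠ 0 := by
    intro j hj
    have : c j ≠ 0 := (Finset.mem_filter.mp hj).2
    exact smul_ne_zero this (hf j)
  have hinj' : Set.InjOn (v ∘ fun j => c j • f j) t := by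
    intro x hx y hy h
    have hx' : c x ≠ 0 := (Finset.mem_filter.mp hx).2
    have hy' : c y ≠ 0 := (Finset.mem_filter.mp hy).2
    simp only [Function.comp_apply] at h
    rw [hv_smul _ _ hx' (hf x), hv_smul _ _ hy' (hf y)] at h
    exact hinj h
  obtain ⟨hne, _⟩ := preval_sum_ne_zero hv_add hv_smul (fun j => c j • f j) t htne hgz hinj'
  exact hne hsum'

end Aux

/-- If `v` is a pre-valuation with one-dimensional leaves on a
finite-dimensional complex vector space `V`, then `V` has a basis `B` (a set of vectors)
on which `v` takes pairwise distinct values. -/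
theorem prevaluation_one_dim_leaves_exists_basis_distinct_values
    (V : Type*) [AddCommGroup V] [Module ℂ V] [FiniteDimensional ℂ V]
    (Γ : Type*) [LinearOrder Γ]
    (v : V → Γ)
    (hv_add : ∀ f g : V, f ≠ 0 → g ≠ 0 → f + g ≠ 0 → min (v f) (v g) ≤ v (f + g))
    (hv_smul : ∀ (c : ℂ) (f : V), c ≠ 0 → f ≠ 0 → v (c • f) = v f)
    (hv_leaves : ∀ f g : V, f ≠ 0 → g ≠ 0 → v f = v g →
      ∃ c : ℂ, c ≠ 0 ∧ (g - c • f = 0 ∨ v g < v (g - c • f))) :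
    ∃ B : Set V, Set.InjOn v B ∧ ∃ b : Module.Basis B ℂ V, ∀ x : B, b x = (x : V) := by
  classical
  -- the set of values of `v` on nonzero vectors
  set S : Set Γ := v '' {x : V | x ≠ 0} with hS
  -- choose a representative for each value
  have hrep : ∀ γ : S, ∃ x : V, x ≠ 0 ∧ v x = γ := by
    rintro ⟨γ, x, hx, rfl⟩
    exact ⟨x, hx, rfl⟩
  choose r hr0 hrv using hrep
  have hrinj : Function.Injective (v ∘ r) := by
    intro γ1 γ2 h
    simp only [Function.comp_apply, hrv] at h
    exact Subtype.ext h
  have hli : LinearIndependent ℂ r :=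
    preval_linearIndependent hv_add hv_smul r hr0 hrinj
  -- S is finite
  have hSfin : Finite S := hli.finite
  have hSfin' : S.Finite := hSfin
  set Sf : Finset Γ := hSfin'.toFinset with hSf
  -- the span of the representatives is everything
  set W : Submodule ℂ V := Submodule.span ℂ (Set.range r) with hW
  have hspan : W = ⊤ := by
    by_contra hne
    obtain ⟨g, -, hgW⟩ := SetLike.exists_of_lt (lt_top_iff_ne_top.mpr hne : W < ⊤)
    have key : ∀ n : ℕ, ∀ g : V, g ∉ W → (Sf.filter (fun γ => v g < γ)).card < n → False := by
      intro n
      induction n with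
      | zero => intro g _ hc; exact absurd hc (Nat.not_lt_zero _)
      | succ n ih =>
        intro g hgW hcard
        have hg0 : g ≠ 0 := fun h => hgW (h ▸ W.zero_mem)
        have hvg : v g ∈ S := ⟨g, hg0, rfl⟩
        set γ : S := ⟨v g, hvg⟩ with hγ
        obtain ⟨c, hc0, hcase⟩ := hv_leaves (r γ) g (hr0 γ) hg0 (by rw [hrv])
        rcases hcase with h | h
        · -- g = c • r γ ∈ W
          have : g = c • r γ := by
            have := sub_eq_zero.mp h; exact this
          exact hgW (this ▸ W.smul_mem c (Submodule.subset_span ⟨γ, rfl⟩))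
        · set g' : V := g - c • r γ with hg'
          have hg'W : g' ∉ W := by
            intro hmem
            apply hgW
            have : g = g' + c • r γ := by rw [hg']; abel
            rw [this]
            exact W.add_mem hmem (W.smul_mem c (Submodule.subset_span ⟨γ, rfl⟩))
          have hg'0 : g' ≠ 0 := fun hz => hg'W (hz ▸ W.zero_mem)
          have hvg' : v g' ∈ Sf := by
            rw [hSf, Set.Finite.mem_toFinset]; exact ⟨g', hg'0, rfl⟩
          have hsub : (Sf.filter (fun δ => v g' < δ)) ⊂ (Sf.filter (fun δ => v g < δ)) := by
            constructor
            · intro δ hδ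
              rw [Finset.mem_filter] at hδ ⊢
              exact ⟨hδ.1, lt_trans h hδ.2⟩
            · intro hsub'
              have : v g' ∈ Sf.filter (fun δ => v g < δ) := Finset.mem_filter.mpr ⟨hvg', h⟩
              have := hsub' this
              rw [Finset.mem_filter] at this
              exact lt_irrefl _ this.2
          exact ih g' hg'W (lt_of_lt_of_le (Finset.card_lt_card hsub)
            (Nat.lt_succ_iff.mp hcard))
    exact key ((Sf.filter (fun γ => v g < γ)).card + 1) g hgW (Nat.lt_succ_self _)
  -- assemble the basis
  refine ⟨Set.range r, ?_, ?_⟩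
  · rintro x ⟨γ1, rfl⟩ y ⟨γ2, rfl⟩ h
    rw [hrv, hrv] at h
    exact congrArg r (Subtype.ext h)
  · have hli' : LinearIndependent ℂ (fun x : Set.range r => (x : V)) :=
      hli.linearIndepOn_id
    have hsp : ⊤ ≤ Submodule.span ℂ (Set.range (fun x : Set.range r => (x : V))) := by
      rw [Subtype.range_coe]
      exact hspan ▸ le_refl _
    exact ⟨Module.Basis.mk hli' hsp, fun x => Module.Basis.mk_apply hli' hsp x⟩
end

section
/- Let V be a finite-dimensional vector space over ℂ, Γ a linearly ordered set, and v : V∖{0} → Γ a pre-valuation with one-dimensional leaves. Then the dimension of V over ℂ equals the cardinality of the image set v(V∖{0}) = {v(f) : f ∈ V, f ≠ 0}. -/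
section Aux

variable {V : Type*} [AddCommGroup V] [Module ℂ V]
variable {Γ : Type*} [LinearOrder Γ]

/-- Key lemma: a nontrivial combination of nonzero vectors with distinct values is nonzero,
and its value is the minimum of the values. -/
lemma prevaluation_sum_aux
    (v : V → Γ)
    (hv_add : ∀ f g : V, f ≠ 0 → g ≠ 0 → f + g ≠ 0 → min (v f) (v g) ≤ v (f + g))
    (hv_smul : ∀ (c : ℂ) (f : V), c ≠ 0 → f ≠ 0 → v (c • f) = v f)
    (r : Γ → V) :
    ∀ (s : Finset Γ), (∀ γ ∈ s, r γ ≠ 0 ∧ v (r γ) = γ) →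
      ∀ (hne : s.Nonempty) (g : Γ → ℂ), (∀ γ ∈ s, g γ ≠ 0) →
        (∑ γ ∈ s, g γ • r γ) ≠ 0 ∧ v (∑ γ ∈ s, g γ • r γ) = s.min' hne := by
  intro s
  induction s using Finset.strongInduction with
  | _ s ih =>
    intro hr hne g hg
    set γ0 := s.min' hne with hγ0
    have hγ0s : γ0 ∈ s := s.min'_mem hne
    have hsum : g γ0 • r γ0 + ∑ γ ∈ s.erase γ0, g γ • r γ = ∑ γ ∈ s, g γ • r γ :=
      Finset.add_sum_erase s (fun γ => g γ • r γ) hγ0s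
    have ha0 : g γ0 • r γ0 ≠ 0 := smul_ne_zero (hg γ0 hγ0s) (hr γ0 hγ0s).1
    have hva : v (g γ0 • r γ0) = γ0 := by
      rw [hv_smul _ _ (hg γ0 hγ0s) (hr γ0 hγ0s).1, (hr γ0 hγ0s).2]
    rcases (s.erase γ0).eq_empty_or_nonempty with he | hne'
    · rw [← hsum, he]
      simp only [Finset.sum_empty, add_zero]
      exact ⟨ha0, hva⟩
    · have hss : s.erase γ0 ⊂ s := Finset.erase_ssubset hγ0s
      obtain ⟨hb0, hvb⟩ := ih _ hss (fun γ hγ => hr γ (Finset.mem_of_mem_erase hγ)) hne' g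
        (fun γ hγ => hg γ (Finset.mem_of_mem_erase hγ))
      set b := ∑ γ ∈ s.erase γ0, g γ • r γ
      set a := g γ0 • r γ0
      have hmin_mem : (s.erase γ0).min' hne' ∈ s.erase γ0 := Finset.min'_mem _ _
      have hbgt : γ0 < v b := by
        rw [hvb]
        rcases lt_or_eq_of_le (s.min'_le _ (Finset.mem_of_mem_erase hmin_mem)) with h | h
        · exact h
        · exact absurd (h ▸ hmin_mem) (by simp [hγ0])
      -- a + b ≠ 0
      have hab : a + b ≠ 0 := by
        intro h
        have hb : b = -a := (neg_eq_of_add_eq_zero_right h).symm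
        have hv2 : v b = γ0 := by
          rw [hb, ← neg_one_smul ℂ a, hv_smul (-1) a (by norm_num) ha0, hva]
        rw [hv2] at hbgt
        exact lt_irrefl _ hbgt
      have h1 : γ0 ≤ v (a + b) := by
        have := hv_add a b ha0 hb0 hab
        rw [hva] at this
        exact le_trans (le_min le_rfl (le_of_lt hbgt)) this
      have h2 : v (a + b) ≤ γ0 := by
        have hnb : (-b) ≠ 0 := neg_ne_zero.mpr hb0
        have hvnb : v (-b) = v b := by
          rw [← neg_one_smul ℂ b, hv_smul (-1) b (by norm_num) hb0]
        have hle := hv_add (a + b) (-b) hab hnb (by simpa using ha0)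
        rw [add_neg_cancel_right, hvnb, hva] at hle
        rcases le_total (v (a + b)) (v b) with h | h
        · rwa [min_eq_left h] at hle
        · rw [min_eq_right h] at hle
          exact absurd (lt_of_lt_of_le hbgt hle) (lt_irrefl _)
      rw [← hsum]
      exact ⟨hab, le_antisymm h2 h1⟩

lemma prevaluation_indep_aux
    (v : V → Γ)
    (hv_add : ∀ f g : V, f ≠ 0 → g ≠ 0 → f + g ≠ 0 → min (v f) (v g) ≤ v (f + g))
    (hv_smul : ∀ (c : ℂ) (f : V), c ≠ 0 → f ≠ 0 → v (c • f) = v f)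
    (r : Γ → V) (T : Finset Γ) (hT : ∀ γ ∈ T, r γ ≠ 0 ∧ v (r γ) = γ) :
    LinearIndependent ℂ (fun γ : ↥T => r ↑γ) := by
  classical
  rw [Fintype.linearIndependent_iff]
  intro g hg i
  set G : Γ → ℂ := fun γ => if h : γ ∈ T then g ⟨γ, h⟩ else 0 with hG
  have hGi : ∀ i : ↥T, G ↑i = g i := by
    intro i; simp [hG, i.2]
  have hsum1 : ∑ i : ↥T, g i • r ↑i = ∑ γ ∈ T, G γ • r γ := by
    rw [← Finset.sum_coe_sort T (fun γ => G γ • r γ)]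
    exact Finset.sum_congr rfl (fun i _ => by rw [hGi])
  set s := T.filter (fun γ => G γ ≠ 0) with hs
  have hsum2 : ∑ γ ∈ T, G γ • r γ = ∑ γ ∈ s, G γ • r γ := by
    rw [hs, Finset.sum_filter_of_ne]
    intro γ _ h
    intro h0
    exact h (by rw [h0, zero_smul])
  rcases s.eq_empty_or_nonempty with he | hne
  · by_contra hgi
    have : (i : Γ) ∈ s := Finset.mem_filter.mpr ⟨i.2, by rw [hGi]; exact hgi⟩
    rw [he] at this
    exact absurd this (Finset.notMem_empty _)
  · exfalso
    have hss : ∀ γ ∈ s, r γ ≠ 0 ∧ v (r γ) = γ :=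
      fun γ hγ => hT γ (Finset.mem_filter.mp hγ).1
    have hgs : ∀ γ ∈ s, G γ ≠ 0 := fun γ hγ => (Finset.mem_filter.mp hγ).2
    obtain ⟨hne0, -⟩ := prevaluation_sum_aux v hv_add hv_smul r s hss hne G hgs
    rw [hsum1, hsum2] at hg
    exact hne0 hg

lemma prevaluation_span_aux
    (v : V → Γ)
    (hv_leaves : ∀ f g : V, f ≠ 0 → g ≠ 0 → v f = v g →
      ∃ c : ℂ, c ≠ 0 ∧ (g - c • f = 0 ∨ v g < v (g - c • f)))
    (r : Γ → V) (T : Finset Γ) (hT : ∀ γ ∈ T, r γ ≠ 0 ∧ v (r γ) = γ)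
    (hTS : ∀ f : V, f ≠ 0 → v f ∈ T) :
    ∀ (n : ℕ) (f : V), f ≠ 0 → (T.filter (fun γ => v f < γ)).card ≤ n →
      f ∈ Submodule.span ℂ (r '' ↑T) := by
  intro n
  induction n with
  | zero =>
    intro f hf hcard
    have hvf : v f ∈ T := hTS f hf
    obtain ⟨c, hc, hor⟩ := hv_leaves (r (v f)) f (hT _ hvf).1 hf (hT _ hvf).2
    by_cases hf' : f - c • r (v f) = 0
    · have : f = c • r (v f) := by
        rw [sub_eq_zero] at hf'; exact hf'
      rw [this]
      exact Submodule.smul_mem _ _ (Submodule.subset_span ⟨v f, hvf, rfl⟩)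
    · exfalso
      rcases hor with h | h
      · exact hf' h
      · have : v (f - c • r (v f)) ∈ T.filter (fun γ => v f < γ) :=
          Finset.mem_filter.mpr ⟨hTS _ hf', h⟩
        have := Finset.card_pos.mpr ⟨_, this⟩
        omega
  | succ n ih =>
    intro f hf hcard
    have hvf : v f ∈ T := hTS f hf
    obtain ⟨c, hc, hor⟩ := hv_leaves (r (v f)) f (hT _ hvf).1 hf (hT _ hvf).2
    by_cases hf' : f - c • r (v f) = 0
    · have : f = c • r (v f) := by rw [sub_eq_zero] at hf'; exact hf'
      rw [this]
      exact Submodule.smul_mem _ _ (Submodule.subset_span ⟨v f, hvf, rfl⟩)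
    · have h : v f < v (f - c • r (v f)) := by
        rcases hor with h | h
        · exact absurd h hf'
        · exact h
      set f' := f - c • r (v f) with hf'def
      have hmem : v f' ∈ T.filter (fun γ => v f < γ) :=
        Finset.mem_filter.mpr ⟨hTS _ hf', h⟩
      have hsub : T.filter (fun γ => v f' < γ) ⊆ (T.filter (fun γ => v f < γ)).erase (v f') := by
        intro γ hγ
        obtain ⟨hγT, hγgt⟩ := Finset.mem_filter.mp hγ
        refine Finset.mem_erase.mpr ⟨?_, Finset.mem_filter.mpr ⟨hγT, lt_trans h hγgt⟩⟩
        intro heq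
        rw [heq] at hγgt
        exact absurd hγgt (lt_irrefl _)
      have hcard' : (T.filter (fun γ => v f' < γ)).card ≤ n := by
        have h1 := Finset.card_le_card hsub
        have h2 := Finset.card_erase_of_mem hmem
        omega
      have hmemspan := ih f' hf' hcard'
      have : f = f' + c • r (v f) := by rw [hf'def]; abel
      rw [this]
      exact Submodule.add_mem _ hmemspan
        (Submodule.smul_mem _ _ (Submodule.subset_span ⟨v f, hvf, rfl⟩))

end Aux

/-- If `v` is a pre-valuation with one-dimensional leaves on a
finite-dimensional complex vector space `V`, then `dim V` equals the cardinality of the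
image set `v (V ∖ {0})`. -/
theorem prevaluation_one_dim_leaves_finrank_eq_card_image
    (V : Type*) [AddCommGroup V] [Module ℂ V] [FiniteDimensional ℂ V]
    (Γ : Type*) [LinearOrder Γ]
    (v : V → Γ)
    (hv_add : ∀ f g : V, f ≠ 0 → g ≠ 0 → f + g ≠ 0 → min (v f) (v g) ≤ v (f + g))
    (hv_smul : ∀ (c : ℂ) (f : V), c ≠ 0 → f ≠ 0 → v (c • f) = v f)
    (hv_leaves : ∀ f g : V, f ≠ 0 → g ≠ 0 → v f = v g →
      ∃ c : ℂ, c ≠ 0 ∧ (g - c • f = 0 ∨ v g < v (g - c • f))) :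
    Module.finrank ℂ V = (v '' {f : V | f ≠ 0}).ncard := by
  classical
  set S : Set Γ := v '' {f : V | f ≠ 0} with hSdef
  have hex : ∀ γ ∈ S, ∃ f : V, f ≠ 0 ∧ v f = γ := by
    intro γ hγ
    obtain ⟨f, hf, hvf⟩ := hγ
    exact ⟨f, hf, hvf⟩
  set r : Γ → V := fun γ => if h : γ ∈ S then (hex γ h).choose else 0 with hrdef
  have hr : ∀ γ ∈ S, r γ ≠ 0 ∧ v (r γ) = γ := by
    intro γ hγ
    have := (hex γ hγ).choose_spec
    simp only [hrdef, dif_pos hγ]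
    exact this
  -- S is finite
  have hSfin : S.Finite := by
    by_contra hinf
    have hinf' : S.Infinite := hinf
    obtain ⟨t, hts, htc⟩ := hinf'.exists_subset_card_eq (Module.finrank ℂ V + 1)
    have hli := prevaluation_indep_aux v hv_add hv_smul r t
      (fun γ hγ => hr γ (hts hγ))
    have := hli.fintype_card_le_finrank
    rw [Fintype.card_coe, htc] at this
    omega
  set T : Finset Γ := hSfin.toFinset with hTdef
  have hTmem : ∀ γ, γ ∈ T ↔ γ ∈ S := fun γ => hSfin.mem_toFinset
  have hT : ∀ γ ∈ T, r γ ≠ 0 ∧ v (r γ) = γ := fun γ hγ => hr γ ((hTmem γ).mp hγ)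
  have hTS : ∀ f : V, f ≠ 0 → v f ∈ T := by
    intro f hf
    exact (hTmem _).mpr ⟨f, hf, rfl⟩
  have hli := prevaluation_indep_aux v hv_add hv_smul r T hT
  have hsp : ⊤ ≤ Submodule.span ℂ (Set.range (fun γ : ↥T => r ↑γ)) := by
    intro f _
    have hrange : Set.range (fun γ : ↥T => r ↑γ) = r '' ↑T := by
      ext x
      simp [Set.mem_image]
    rw [hrange]
    by_cases hf : f = 0
    · rw [hf]; exact Submodule.zero_mem _
    · exact prevaluation_span_aux v hv_leaves r T hT hTS
        ((T.filter (fun γ => v f < γ)).card) f hf le_rfl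
  let b : Module.Basis ↥T ℂ V := Module.Basis.mk hli hsp
  have := Module.finrank_eq_card_basis b
  rw [this, Fintype.card_coe, Set.ncard_eq_toFinset_card _ hSfin]
end

section
/- Let F be a field containing ℂ and let v : F∖{0} → ℤ^d be a valuation with one-dimensional leaves, where ℤ^d is ordered lexicographically. Assume there exist u₁, …, u_d ∈ F∖{0} with v(u_i) equal to the i-th standard basis vector of ℤ^d for each i. Let A = ⊕_{k≥0} A_k be a graded ℂ-subalgebra of the polynomial ring F[t] (each A_k a ℂ-subspace of F, identified with coefficients of t^k) and let ṽ : A∖{0} → ℤ × ℤ^d be the extended valuation ṽ(∑ f_i t^i) = (s, v(f_s)) (f_s the top nonzero coefficient), with ℤ × ℤ^d ordered by (k,x) > (ℓ,y) iff k < ℓ, or k = ℓ and x > y. Let S = S(A, ṽ) be the value semigroup, and assume S is finitely generated. For γ ∈ ℤ × ℤ^d put F_γ = {f ∈ A : f = 0 or ṽ(f) ≥ γ} and F_{>γ} = {f ∈ A : f = 0 or ṽ(f) > γ}. Then the associated graded algebra gr A = ⊕_{γ∈S} F_γ/F_{>γ} is isomorphic as a ℂ-algebra to the monoid algebra ℂ[S]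 of the commutative monoid S. -/
set_option synthInstance.maxHeartbeats 800000
set_option maxHeartbeats 1600000

noncomputable section

/-- The order on `ℤ × Γ`: `extLe a b` means `a ≤ b`, where `(k,x) ≥ (ℓ,y)` iff `k < ℓ`,
or `k = ℓ` and `x ≥ y`. -/
def extLe {Γ : Type*} [LinearOrder Γ] (a b : ℤ × Γ) : Prop :=
  b.1 < a.1 ∨ (a.1 = b.1 ∧ a.2 ≤ b.2)

/-- The corresponding strict order on `ℤ × Γ`. -/
def extLt {Γ : Type*} [LinearOrder Γ] (a b : ℤ × Γ) : Prop :=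
  b.1 < a.1 ∨ (a.1 = b.1 ∧ a.2 < b.2)

theorem extLe_trans {Γ : Type*} [LinearOrder Γ] {a b c : ℤ × Γ}
    (h1 : extLe a b) (h2 : extLe b c) : extLe a c := by
  rcases h1 with h1 | ⟨h1, h1'⟩ <;> rcases h2 with h2 | ⟨h2, h2'⟩
  · exact Or.inl (h2.trans h1)
  · exact Or.inl (h2 ▸ h1)
  · exact Or.inl (h1 ▸ h2)
  · exact Or.inr ⟨h1.trans h2, h1'.trans h2'⟩

theorem extLt_of_extLt_of_extLe {Γ : Type*} [LinearOrder Γ] {a b c : ℤ × Γ}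
    (h1 : extLt a b) (h2 : extLe b c) : extLt a c := by
  rcases h1 with h1 | ⟨h1, h1'⟩ <;> rcases h2 with h2 | ⟨h2, h2'⟩
  · exact Or.inl (h2.trans h1)
  · exact Or.inl (h2 ▸ h1)
  · exact Or.inl (h1 ▸ h2)
  · exact Or.inr ⟨h1.trans h2, h1'.trans_le h2'⟩

/-- Shortcut instance: `Fin d` is well-founded under `<`. -/
instance (priority := 10000) instWellFoundedLTFin {d : ℕ} : WellFoundedLT (Fin d) :=
  Finite.to_wellFoundedLT

/-- Shortcut instance: the lexicographic linear order on `ℤ^d`. -/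
noncomputable instance (priority := 10000) instLinearOrderLexPi {d : ℕ} :
    LinearOrder (Lex (Fin d → ℤ)) := inferInstance

section OrderAux

variable {Γ' : Type*} [LinearOrder Γ'] [AddCommGroup Γ']

theorem extLe_refl (a : ℤ × Γ') : extLe a a := Or.inr ⟨rfl, le_rfl⟩

theorem extLt_irrefl (a : ℤ × Γ') : ¬ extLt a a := by
  rintro (h | ⟨-, h⟩) <;> exact lt_irrefl _ h

theorem extLe_of_extLt {a b : ℤ × Γ'} (h : extLt a b) : extLe a b := by
  rcases h with h | ⟨h1, h2⟩
  · exact Or.inl h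
  · exact Or.inr ⟨h1, le_of_lt h2⟩

theorem extLt_of_extLe_of_ne {a b : ℤ × Γ'} (h : extLe a b) (hne : a ≠ b) : extLt a b := by
  rcases h with h | ⟨h1, h2⟩
  · exact Or.inl h
  · rcases lt_or_eq_of_le h2 with h2 | h2
    · exact Or.inr ⟨h1, h2⟩
    · exact absurd (Prod.ext h1 h2) hne

theorem hle_of_hlt (hlt : ∀ a b c : Γ', a < b → a + c < b + c) (a b c : Γ') (h : a ≤ b) : a + c ≤ b + c := by
  rcases lt_or_eq_of_le h with h | rfl
  · exact le_of_lt (hlt a b c h)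
  · exact le_rfl

theorem extLt_add_right (hlt : ∀ a b c : Γ', a < b → a + c < b + c) {a b : ℤ × Γ'} (h : extLt a b) (c : ℤ × Γ') : extLt (a + c) (b + c) := by
  rcases h with h | ⟨h1, h2⟩
  · exact Or.inl (show b.1 + c.1 < a.1 + c.1 by omega)
  · exact Or.inr ⟨show a.1 + c.1 = b.1 + c.1 by omega, hlt _ _ _ h2⟩

theorem extLe_add_right (hlt : ∀ a b c : Γ', a < b → a + c < b + c) {a b : ℤ × Γ'} (h : extLe a b) (c : ℤ × Γ') : extLe (a + c) (b + c) := by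
  rcases h with h | ⟨h1, h2⟩
  · exact Or.inl (show b.1 + c.1 < a.1 + c.1 by omega)
  · exact Or.inr ⟨show a.1 + c.1 = b.1 + c.1 by omega, hle_of_hlt hlt _ _ _ h2⟩

theorem extLt_add_left (hlt : ∀ a b c : Γ', a < b → a + c < b + c) {a b : ℤ × Γ'} (h : extLt a b) (c : ℤ × Γ') : extLt (c + a) (c + b) := by
  have := extLt_add_right hlt h c
  rwa [add_comm a c, add_comm b c] at this

theorem extLe_add_left (hlt : ∀ a b c : Γ', a < b → a + c < b + c) {a b : ℤ × Γ'} (h : extLe a b) (c : ℤ × Γ') : extLe (c + a) (c + b) := by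
  have := extLe_add_right hlt h c
  rwa [add_comm a c, add_comm b c] at this

theorem extLt_add_extLe (hlt : ∀ a b c : Γ', a < b → a + c < b + c) {a b c e : ℤ × Γ'} (h1 : extLt a b) (h2 : extLe c e) :
    extLt (a + c) (b + e) :=
  extLt_of_extLt_of_extLe (extLt_add_right hlt h1 c) (extLe_add_left hlt h2 b)

theorem extLt_add_extLt (hlt : ∀ a b c : Γ', a < b → a + c < b + c) {a b c e : ℤ × Γ'} (h1 : extLt a b) (h2 : extLt c e) :
    extLt (a + c) (b + e) :=
  extLt_add_extLe hlt h1 (extLe_of_extLt h2)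

theorem extLt_of_add_right (hlt : ∀ a b c : Γ', a < b → a + c < b + c) {a b c : ℤ × Γ'}
    (h : extLt (a + c) (b + c)) : extLt a b := by
  rcases h with h | ⟨h1, h2⟩
  · have h' : b.1 + c.1 < a.1 + c.1 := h
    exact Or.inl (by omega)
  · have h1' : a.1 + c.1 = b.1 + c.1 := h1
    have h2' : a.2 + c.2 < b.2 + c.2 := h2
    refine Or.inr ⟨by omega, ?_⟩
    by_contra hcon
    rcases lt_or_eq_of_le (not_lt.mp hcon) with hc' | hc'
    · exact absurd (hlt _ _ c.2 hc') (not_lt.mpr h2'.le)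
    · rw [← hc'] at h2'; exact lt_irrefl _ h2'

end OrderAux

section ValAux

open Polynomial

variable {F : Type*} [Field F] [Algebra ℂ F] {Γ' : Type*} [LinearOrder Γ'] [AddCommGroup Γ']
variable {vt : Polynomial F → ℤ × Γ'}

/-- `x` is zero or has valuation strictly larger than `γ`. -/
def HiVal (vt : Polynomial F → ℤ × Γ') (γ : ℤ × Γ') (x : Polynomial F) : Prop :=
  x = 0 ∨ extLt γ (vt x)

theorem HiVal.add
    (hvt_min : ∀ p q : Polynomial F, p ≠ 0 → q ≠ 0 → p + q ≠ 0 →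
      extLe (vt p) (vt (p + q)) ∨ extLe (vt q) (vt (p + q)))
    {γ : ℤ × Γ'} {x y : Polynomial F} (hx : HiVal vt γ x) (hy : HiVal vt γ y) :
    HiVal vt γ (x + y) := by
  by_cases hx0 : x = 0
  · rw [hx0, zero_add]; exact hy
  by_cases hy0 : y = 0
  · rw [hy0, add_zero]; exact hx
  by_cases h0 : x + y = 0
  · exact Or.inl h0
  rcases hvt_min x y hx0 hy0 h0 with h | h
  · exact Or.inr (extLt_of_extLt_of_extLe (hx.resolve_left hx0) h)
  · exact Or.inr (extLt_of_extLt_of_extLe (hy.resolve_left hy0) h)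

theorem HiVal.neg
    (hvt_smul : ∀ (c : ℂ) (p : Polynomial F), c ≠ 0 → p ≠ 0 → vt (c • p) = vt p)
    {γ : ℤ × Γ'} {x : Polynomial F} (hx : HiVal vt γ x) : HiVal vt γ (-x) := by
  by_cases hx0 : x = 0
  · exact Or.inl (by rw [hx0, neg_zero])
  · refine Or.inr ?_
    rw [← neg_one_smul ℂ x, hvt_smul (-1) x (by norm_num) hx0]
    exact hx.resolve_left hx0

theorem HiVal.sub
    (hvt_min : ∀ p q : Polynomial F, p ≠ 0 → q ≠ 0 → p + q ≠ 0 →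
      extLe (vt p) (vt (p + q)) ∨ extLe (vt q) (vt (p + q)))
    (hvt_smul : ∀ (c : ℂ) (p : Polynomial F), c ≠ 0 → p ≠ 0 → vt (c • p) = vt p)
    {γ : ℤ × Γ'} {x y : Polynomial F} (hx : HiVal vt γ x) (hy : HiVal vt γ y) :
    HiVal vt γ (x - y) := by
  rw [sub_eq_add_neg]
  exact HiVal.add hvt_min hx (HiVal.neg hvt_smul hy)

theorem HiVal.mul_left (hlt : ∀ a b c : Γ', a < b → a + c < b + c)
    (hvt_mul : ∀ p q : Polynomial F, p ≠ 0 → q ≠ 0 → vt (p * q) = vt p + vt q) {γ : ℤ × Γ'} (x : Polynomial F) (hx0 : x ≠ 0)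
    {y : Polynomial F} (hy : HiVal vt γ y) : HiVal vt (vt x + γ) (x * y) := by
  by_cases hy0 : y = 0
  · exact Or.inl (by rw [hy0, mul_zero])
  · refine Or.inr ?_
    rw [hvt_mul x y hx0 hy0]
    exact extLt_add_left hlt (hy.resolve_left hy0) (vt x)

theorem HiVal.mul_right (hlt : ∀ a b c : Γ', a < b → a + c < b + c)
    (hvt_mul : ∀ p q : Polynomial F, p ≠ 0 → q ≠ 0 → vt (p * q) = vt p + vt q) {γ : ℤ × Γ'} {y : Polynomial F} (hy : HiVal vt γ y)
    (x : Polynomial F) (hx0 : x ≠ 0) : HiVal vt (γ + vt x) (y * x) := by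
  rw [mul_comm y x, add_comm γ (vt x)]
  exact HiVal.mul_left hlt hvt_mul x hx0 hy

theorem HiVal.mul_mul (hlt : ∀ a b c : Γ', a < b → a + c < b + c)
    (hvt_mul : ∀ p q : Polynomial F, p ≠ 0 → q ≠ 0 → vt (p * q) = vt p + vt q) {γ δ : ℤ × Γ'} {x y : Polynomial F}
    (hx : HiVal vt γ x) (hy : HiVal vt δ y) : HiVal vt (γ + δ) (x * y) := by
  by_cases hx0 : x = 0
  · exact Or.inl (by rw [hx0, zero_mul])
  by_cases hy0 : y = 0
  · exact Or.inl (by rw [hy0, mul_zero])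
  refine Or.inr ?_
  rw [hvt_mul x y hx0 hy0]
  exact extLt_add_extLt hlt (hx.resolve_left hx0) (hy.resolve_left hy0)

theorem HiVal.congr {γ δ : ℤ × Γ'} {x : Polynomial F} (hx : HiVal vt γ x) (h : γ = δ) :
    HiVal vt δ x := h ▸ hx

end ValAux

section LeavesAux

open Polynomial

variable {F : Type*} [Field F] [Algebra ℂ F]

theorem vt_one' {Γ' : Type*} [LinearOrder Γ'] [AddCommGroup Γ'] {vt : Polynomial F → ℤ × Γ'}
    (hvt_mul : ∀ p q : Polynomial F, p ≠ 0 → q ≠ 0 → vt (p * q) = vt p + vt q) :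
    vt (1 : Polynomial F) = 0 := by
  have h := hvt_mul 1 1 one_ne_zero one_ne_zero
  rw [mul_one] at h
  have := left_eq_add.mp h
  exact this

theorem vt_pow' {Γ' : Type*} [LinearOrder Γ'] [AddCommGroup Γ'] {vt : Polynomial F → ℤ × Γ'}
    (hvt_mul : ∀ p q : Polynomial F, p ≠ 0 → q ≠ 0 → vt (p * q) = vt p + vt q)
    (f : Polynomial F) (hf : f ≠ 0) : ∀ m : ℕ, vt (f ^ m) = m • vt f
  | 0 => by rw [pow_zero, vt_one' hvt_mul, zero_smul]
  | (m + 1) => by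
      rw [pow_succ, hvt_mul _ _ (pow_ne_zero m hf) hf, vt_pow' hvt_mul f hf m, succ_nsmul]

theorem vt_leaves' {d : ℕ} {v : F → Lex (Fin d → ℤ)} {vt : Polynomial F → ℤ × Lex (Fin d → ℤ)}
    (hvt : ∀ p : Polynomial F, p ≠ 0 → vt p = ((p.natDegree : ℤ), v p.leadingCoeff))
    (hv_leaves : ∀ f g : F, f ≠ 0 → g ≠ 0 → v f = v g →
      ∃ c : ℂ, c ≠ 0 ∧ (g - c • f = 0 ∨ v g < v (g - c • f)))
    {p q : Polynomial F} (hp : p ≠ 0) (hq : q ≠ 0) (h : vt p = vt q) :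
    ∃ c : ℂ, c ≠ 0 ∧ (q - c • p = 0 ∨ extLt (vt q) (vt (q - c • p))) := by
  have h' := h
  rw [hvt p hp, hvt q hq, Prod.mk.injEq] at h'
  obtain ⟨hdeg, hlc⟩ := h'
  have hdeg' : p.natDegree = q.natDegree := by exact_mod_cast hdeg
  obtain ⟨c, hc0, hc⟩ := hv_leaves p.leadingCoeff q.leadingCoeff
    (leadingCoeff_ne_zero.mpr hp) (leadingCoeff_ne_zero.mpr hq) hlc
  have hCs : c • p = Polynomial.C (algebraMap ℂ F c) * p := by
    rw [Algebra.smul_def, Polynomial.algebraMap_apply]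
  refine ⟨c, hc0, ?_⟩
  by_cases hr : q - c • p = 0
  · exact Or.inl hr
  right
  have hrd : (q - c • p).natDegree ≤ q.natDegree := by
    rw [hCs]
    refine le_trans (natDegree_sub_le _ _) (max_le le_rfl ?_)
    exact le_trans (natDegree_C_mul_le _ _) (le_of_eq hdeg')
  have hpc : p.coeff q.natDegree = p.leadingCoeff := by rw [← hdeg']; rfl
  have hcoeff : (q - c • p).coeff q.natDegree = q.leadingCoeff - c • p.leadingCoeff := by
    rw [hCs, Polynomial.coeff_sub, coeff_C_mul, hpc, ← Algebra.smul_def]; rfl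
  have hlow : (q - c • p).coeff q.natDegree = 0 → extLt (vt q) (vt (q - c • p)) := by
    intro h0
    have hlt' : (q - c • p).natDegree < q.natDegree := by
      rcases lt_or_eq_of_le hrd with h' | h'
      · exact h'
      · have hl0 : (q - c • p).leadingCoeff = 0 := by
          show (q - c • p).coeff ((q - c • p).natDegree) = 0
          rw [h']; exact h0
        exact absurd hl0 (leadingCoeff_ne_zero.mpr hr)
    refine Or.inl ?_
    rw [hvt q hq, hvt _ hr]
    show ((q - c • p).natDegree : ℤ) < (q.natDegree : ℤ)
    exact_mod_cast hlt'
  rcases hc with hc | hc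
  · exact hlow (by rw [hcoeff, hc])
  · by_cases h0 : (q - c • p).coeff q.natDegree = 0
    · exact hlow h0
    · have hnd : (q - c • p).natDegree = q.natDegree :=
        le_antisymm hrd (le_natDegree_of_ne_zero h0)
      refine Or.inr ⟨?_, ?_⟩
      · rw [hvt q hq, hvt _ hr]
        show (q.natDegree : ℤ) = ((q - c • p).natDegree : ℤ)
        exact_mod_cast hnd.symm
      · rw [hvt q hq, hvt _ hr]
        show v q.leadingCoeff < v (q - c • p).leadingCoeff
        have hl : (q - c • p).leadingCoeff = q.leadingCoeff - c • p.leadingCoeff := by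
          show (q - c • p).coeff ((q - c • p).natDegree) = _
          rw [hnd]; exact hcoeff
        rw [hl]; exact hc

end LeavesAux


variable {F : Type*} [Field F] [Algebra ℂ F] {Γ : Type*} [LinearOrder Γ]

/-- Shortcut instance to speed up instance resolution. -/
instance (priority := 10000) instAddCommGroupCoeSubalgebra (A : Subalgebra ℂ (Polynomial F)) :
    AddCommGroup ↥A := inferInstance

/-- Shortcut instance to speed up instance resolution. -/
instance (priority := 10000) instModuleCoeSubalgebra (A : Subalgebra ℂ (Polynomial F)) :
    Module ℂ ↥A := inferInstance

variable (A : Subalgebra ℂ (Polynomial F)) (vt : Polynomial F → ℤ × Γ)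
  (hvt_min : ∀ p q : Polynomial F, p ≠ 0 → q ≠ 0 → p + q ≠ 0 →
    extLe (vt p) (vt (p + q)) ∨ extLe (vt q) (vt (p + q)))
  (hvt_smul : ∀ (c : ℂ) (p : Polynomial F), c ≠ 0 → p ≠ 0 → vt (c • p) = vt p)

/-- The subspace `F_γ = {f ∈ A : f = 0 or ṽ f ≥ γ}` of a subalgebra `A ⊆ F[t]` determined by
a (pre-)valuation `ṽ = vt`. -/
def filtAt (γ : ℤ × Γ) : Submodule ℂ ↥A where
  carrier := {f : ↥A | (f : Polynomial F) = 0 ∨ extLe γ (vt ↑f)}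
  add_mem' := by
    rintro f g hf hg
    show ((f + g : ↥A) : Polynomial F) = 0 ∨ extLe γ (vt ((f + g : ↥A) : Polynomial F))
    have hf' : ((f : Polynomial F) = 0) ∨ extLe γ (vt ↑f) := hf
    have hg' : ((g : Polynomial F) = 0) ∨ extLe γ (vt ↑g) := hg
    have hco : ((f + g : ↥A) : Polynomial F) = (f : Polynomial F) + (g : Polynomial F) := rfl
    by_cases hf0 : (f : Polynomial F) = 0
    · rw [hco, hf0, zero_add]; exact hg'
    by_cases hg0 : (g : Polynomial F) = 0
    · rw [hco, hg0, add_zero]; exact hf'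
    by_cases hfg0 : (f : Polynomial F) + (g : Polynomial F) = 0
    · exact Or.inl (hco.trans hfg0)
    · rw [hco]
      rcases hvt_min (f : Polynomial F) (g : Polynomial F) hf0 hg0 hfg0 with h | h
      · exact Or.inr (extLe_trans (hf'.resolve_left hf0) h)
      · exact Or.inr (extLe_trans (hg'.resolve_left hg0) h)
  zero_mem' := Or.inl (by simp)
  smul_mem' := by
    intro c f hf
    show ((c • f : ↥A) : Polynomial F) = 0 ∨ extLe γ (vt ((c • f : ↥A) : Polynomial F))
    have hf' : ((f : Polynomial F) = 0) ∨ extLe γ (vt ↑f) := hf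
    have hco : ((c • f : ↥A) : Polynomial F) = c • (f : Polynomial F) := rfl
    by_cases hc : c = 0
    · exact Or.inl (by rw [hco, hc, zero_smul])
    by_cases hf0 : (f : Polynomial F) = 0
    · exact Or.inl (by rw [hco, hf0, smul_zero])
    · rw [hco, hvt_smul c _ hc hf0]
      exact Or.inr (hf'.resolve_left hf0)

/-- The subspace `F_{>γ} = {f ∈ A : f = 0 or ṽ f > γ}`. -/
def filtGt (γ : ℤ × Γ) : Submodule ℂ ↥A where
  carrier := {f : ↥A | (f : Polynomial F) = 0 ∨ extLt γ (vt ↑f)}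
  add_mem' := by
    rintro f g hf hg
    show ((f + g : ↥A) : Polynomial F) = 0 ∨ extLt γ (vt ((f + g : ↥A) : Polynomial F))
    have hf' : ((f : Polynomial F) = 0) ∨ extLt γ (vt ↑f) := hf
    have hg' : ((g : Polynomial F) = 0) ∨ extLt γ (vt ↑g) := hg
    have hco : ((f + g : ↥A) : Polynomial F) = (f : Polynomial F) + (g : Polynomial F) := rfl
    by_cases hf0 : (f : Polynomial F) = 0
    · rw [hco, hf0, zero_add]; exact hg'
    by_cases hg0 : (g : Polynomial F) = 0
    · rw [hco, hg0, add_zero]; exact hf'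
    by_cases hfg0 : (f : Polynomial F) + (g : Polynomial F) = 0
    · exact Or.inl (hco.trans hfg0)
    · rw [hco]
      rcases hvt_min (f : Polynomial F) (g : Polynomial F) hf0 hg0 hfg0 with h | h
      · exact Or.inr (extLt_of_extLt_of_extLe (hf'.resolve_left hf0) h)
      · exact Or.inr (extLt_of_extLt_of_extLe (hg'.resolve_left hg0) h)
  zero_mem' := Or.inl (by simp)
  smul_mem' := by
    intro c f hf
    show ((c • f : ↥A) : Polynomial F) = 0 ∨ extLt γ (vt ((c • f : ↥A) : Polynomial F))
    have hf' : ((f : Polynomial F) = 0) ∨ extLt γ (vt ↑f) := hf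
    have hco : ((c • f : ↥A) : Polynomial F) = c • (f : Polynomial F) := rfl
    by_cases hc : c = 0
    · exact Or.inl (by rw [hco, hc, zero_smul])
    by_cases hf0 : (f : Polynomial F) = 0
    · exact Or.inl (by rw [hco, hf0, smul_zero])
    · rw [hco, hvt_smul c _ hc hf0]
      exact Or.inr (hf'.resolve_left hf0)

/-- The leaf `F_γ / F_{>γ}` of the filtration. -/
abbrev grQuot (γ : ℤ × Γ) :=
  ↥(filtAt A vt hvt_min hvt_smul γ) ⧸
    Submodule.comap (filtAt A vt hvt_min hvt_smul γ).subtype (filtGt A vt hvt_min hvt_smul γ)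

/-- Let `F ⊇ ℂ` be a field with a faithful `ℤ^d`-valued valuation `v` with
one-dimensional leaves (`ℤ^d` ordered lexicographically), `A = ⊕_k A_k` a graded `ℂ`-subalgebra
of `F[t]`, `ṽ = vt` the extended valuation with values in `ℤ × ℤ^d` (ordered by
`(k,x) > (ℓ,y)` iff `k < ℓ`, or `k = ℓ` and `x > y`), and `S = S(A, ṽ)` the value semigroup,
assumed finitely generated. Then the associated graded algebra `gr A = ⊕_{γ ∈ S} F_γ / F_{>γ}`
(i.e. any commutative `ℂ`-algebra `G` whose underlying module is `⊕_{γ ∈ S} F_γ / F_{>γ}` and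
whose multiplication is induced by that of `A`) is isomorphic as a `ℂ`-algebra to the monoid
algebra `ℂ[S]`. -/
theorem associated_graded_iso_semigroup_algebra
    {d : ℕ}
    (v : F → Lex (Fin d → ℤ))
    (hv_add : ∀ f g : F, f ≠ 0 → g ≠ 0 → f + g ≠ 0 → min (v f) (v g) ≤ v (f + g))
    (hv_smul : ∀ (c : ℂ) (f : F), c ≠ 0 → f ≠ 0 → v (c • f) = v f)
    (hv_mul : ∀ f g : F, f ≠ 0 → g ≠ 0 → v (f * g) = v f + v g)
    (hv_leaves : ∀ f g : F, f ≠ 0 → g ≠ 0 → v f = v g →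
      ∃ c : ℂ, c ≠ 0 ∧ (g - c • f = 0 ∨ v g < v (g - c • f)))
    -- `v` takes the standard basis vectors of `ℤ^d` as values
    (u : Fin d → F) (hu : ∀ i, u i ≠ 0 ∧ v (u i) = toLex (Pi.single i 1))
    (A : Subalgebra ℂ (Polynomial F))
    -- `A` is graded: it contains the homogeneous components of all its elements
    (hA_graded : ∀ p ∈ A, ∀ k : ℕ, Polynomial.C (p.coeff k) * Polynomial.X ^ k ∈ A)
    -- the extended valuation `ṽ` ...
    (vt : Polynomial F → ℤ × Lex (Fin d → ℤ))
    (hvt : ∀ p : Polynomial F, p ≠ 0 → vt p = ((p.natDegree : ℤ), v p.leadingCoeff))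
    -- ... which is a valuation for the order `extLe` on `ℤ × ℤ^d`:
    (hvt_min : ∀ p q : Polynomial F, p ≠ 0 → q ≠ 0 → p + q ≠ 0 →
      extLe (vt p) (vt (p + q)) ∨ extLe (vt q) (vt (p + q)))
    (hvt_smul : ∀ (c : ℂ) (p : Polynomial F), c ≠ 0 → p ≠ 0 → vt (c • p) = vt p)
    (hvt_mul : ∀ p q : Polynomial F, p ≠ 0 → q ≠ 0 → vt (p * q) = vt p + vt q)
    -- the value semigroup `S = S(A, ṽ)`, assumed finitely generated
    (S : AddSubmonoid (ℤ × Lex (Fin d → ℤ)))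
    (hS : (S : Set (ℤ × Lex (Fin d → ℤ))) =
      {γ | ∃ p : Polynomial F, p ∈ A ∧ p ≠ 0 ∧ vt p = γ})
    (hS_fg : S.FG)
    -- `G` is a realization of the associated graded algebra `gr A = ⊕_{γ ∈ S} F_γ/F_{>γ}`:
    (G : Type) [CommRing G] [Algebra ℂ G]
    (e : G ≃ₗ[ℂ] DirectSum ↥S (fun s : ↥S => grQuot A vt hvt_min hvt_smul ↑s))
    -- whose multiplication is induced by the multiplication of `A`
    (he_mul : ∀ (s t : ↥S) (f g : ↥A)
      (hf : f ∈ filtAt A vt hvt_min hvt_smul ↑s) (hg : g ∈ filtAt A vt hvt_min hvt_smul ↑t)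
      (hfg : f * g ∈ filtAt A vt hvt_min hvt_smul ↑(s + t)),
      e.symm (DirectSum.of (fun s : ↥S => grQuot A vt hvt_min hvt_smul ↑s) s
          (Submodule.Quotient.mk ⟨f, hf⟩)) *
        e.symm (DirectSum.of (fun s : ↥S => grQuot A vt hvt_min hvt_smul ↑s) t
          (Submodule.Quotient.mk ⟨g, hg⟩)) =
      e.symm (DirectSum.of (fun s : ↥S => grQuot A vt hvt_min hvt_smul ↑s) (s + t)
        (Submodule.Quotient.mk ⟨f * g, hfg⟩))) :
    Nonempty (G ≃ₐ[ℂ] AddMonoidAlgebra ℂ ↥S) := by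
  classical
  -- covariance of the lex order
  have hlt : ∀ a b c : Lex (Fin d → ℤ), a < b → a + c < b + c := fun a b c h =>
    add_lt_add_of_lt_of_le h le_rfl
  -- choose representatives for each semigroup element
  have hmemS : ∀ s : ↥S, ∃ pp : Polynomial F, pp ∈ A ∧ pp ≠ 0 ∧ vt pp = ↑s := by
    intro s
    have hs : (↑s : ℤ × Lex (Fin d → ℤ)) ∈ (S : Set (ℤ × Lex (Fin d → ℤ))) := s.2
    rw [hS] at hs
    exact hs
  choose p hpA hp0 hpv using hmemS
  -- the fraction field of F[t]
  let K := FractionRing (Polynomial F)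
  let am : Polynomial F →+* K := algebraMap (Polynomial F) K
  have ham_inj : Function.Injective am := IsFractionRing.injective (Polynomial F) K
  have ham0 : ∀ {x : Polynomial F}, x ≠ 0 → am x ≠ 0 := by
    intro x hx h
    exact hx (ham_inj (by rw [h, map_zero]))
  -- the group generated by S
  let N : Submodule ℤ (ℤ × Lex (Fin d → ℤ)) :=
    Submodule.span ℤ (S : Set (ℤ × Lex (Fin d → ℤ)))
  have hSN : ∀ s : ↥S, (↑s : ℤ × Lex (Fin d → ℤ)) ∈ N := fun s => Submodule.subset_span s.2
  -- a basis of N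
  let eM : (ℤ × (Fin d → ℤ)) ≃ₗ[ℤ] (ℤ × Lex (Fin d → ℤ)) :=
    { toFun := fun x => (x.1, toLex x.2)
      map_add' := fun x y => rfl
      map_smul' := fun c x => rfl
      invFun := fun x => (x.1, ofLex x.2)
      left_inv := fun x => rfl
      right_inv := fun x => rfl }
  let bM : Module.Basis (Unit ⊕ Fin d) ℤ (ℤ × Lex (Fin d → ℤ)) :=
    ((Module.Basis.singleton Unit ℤ).prod (Pi.basisFun ℤ (Fin d))).map eM
  obtain ⟨nb, bN⟩ := Submodule.basisOfPid bM N
  -- every element of N is a difference of elements of S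
  have hNdiff : ∀ x : ℤ × Lex (Fin d → ℤ), x ∈ N →
      ∃ s1, s1 ∈ S ∧ ∃ s2, s2 ∈ S ∧ x = s1 - s2 := by
    intro x hx
    induction hx using Submodule.span_induction with
    | mem y hy => exact ⟨y, hy, 0, S.zero_mem, by simp⟩
    | zero => exact ⟨0, S.zero_mem, 0, S.zero_mem, by simp⟩
    | add y z hy hz ihy ihz =>
        obtain ⟨a1, ha1, a2, ha2, rfl⟩ := ihy
        obtain ⟨b1, hb1, b2, hb2, rfl⟩ := ihz
        exact ⟨a1 + b1, S.add_mem ha1 hb1, a2 + b2, S.add_mem ha2 hb2, by abel⟩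
    | smul k y hy ihy =>
        obtain ⟨a1, ha1, a2, ha2, rfl⟩ := ihy
        obtain ⟨m, rfl | rfl⟩ := Int.eq_nat_or_neg k
        · exact ⟨m • a1, S.nsmul_mem ha1 m, m • a2, S.nsmul_mem ha2 m, by
            rw [natCast_zsmul, smul_sub]⟩
        · exact ⟨m • a2, S.nsmul_mem ha2 m, m • a1, S.nsmul_mem ha1 m, by
            rw [neg_smul, natCast_zsmul, smul_sub, neg_sub]⟩
  -- representatives for the basis elements
  have hbasisrep : ∀ j : Fin nb, ∃ f g : Polynomial F, f ∈ A ∧ g ∈ A ∧ f ≠ 0 ∧ g ≠ 0 ∧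
      vt f - vt g = (bN j : ℤ × Lex (Fin d → ℤ)) := by
    intro j
    obtain ⟨s1, hs1, s2, hs2, hx⟩ := hNdiff _ (bN j).2
    have hs1' : ∃ f, f ∈ A ∧ f ≠ 0 ∧ vt f = s1 := by
      have : s1 ∈ (S : Set (ℤ × Lex (Fin d → ℤ))) := hs1
      rw [hS] at this; exact this
    have hs2' : ∃ g, g ∈ A ∧ g ≠ 0 ∧ vt g = s2 := by
      have : s2 ∈ (S : Set (ℤ × Lex (Fin d → ℤ))) := hs2
      rw [hS] at this; exact this
    obtain ⟨f, hfA, hf0, hfv⟩ := hs1'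
    obtain ⟨g, hgA, hg0, hgv⟩ := hs2'
    exact ⟨f, g, hfA, hgA, hf0, hg0, by rw [hfv, hgv, ← hx]⟩
  choose fB gB hfBA hgBA hfB0 hgB0 hfgBv using hbasisrep
  -- the multiplicative section on N
  let uB : Fin nb → Kˣ := fun j =>
    Units.mk0 (am (fB j) / am (gB j)) (div_ne_zero (ham0 (hfB0 j)) (ham0 (hgB0 j)))
  let φ : ↥N →ₗ[ℤ] Additive Kˣ := bN.constr ℤ (fun j => Additive.ofMul (uB j))
  have hrepN : ∀ x : ↥N, ∃ f g : Polynomial F, f ∈ A ∧ g ∈ A ∧ f ≠ 0 ∧ g ≠ 0 ∧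
      ((Additive.toMul (φ x) : Kˣ) : K) * am g = am f ∧
      vt f - vt g = (↑x : ℤ × Lex (Fin d → ℤ)) := by
    intro x
    have hxmem : x ∈ Submodule.span ℤ (Set.range ⇑bN) := by
      rw [bN.span_eq]; trivial
    induction hxmem using Submodule.span_induction with
    | mem y hy =>
        obtain ⟨j, rfl⟩ := hy
        refine ⟨fB j, gB j, hfBA j, hgBA j, hfB0 j, hgB0 j, ?_, hfgBv j⟩
        have hb : φ (bN j) = Additive.ofMul (uB j) := bN.constr_basis ℤ _ j
        rw [hb]
        show ((uB j : Kˣ) : K) * am (gB j) = am (fB j)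
        exact div_mul_cancel₀ _ (ham0 (hgB0 j))
    | zero =>
        refine ⟨1, 1, A.one_mem, A.one_mem, one_ne_zero, one_ne_zero, ?_, by simp⟩
        rw [map_zero]
        show ((Additive.toMul (0 : Additive Kˣ) : Kˣ) : K) * am 1 = am 1
        simp
    | add y z hy hz ihy ihz =>
        obtain ⟨f1, g1, hf1A, hg1A, hf10, hg10, he1, hv1⟩ := ihy
        obtain ⟨f2, g2, hf2A, hg2A, hf20, hg20, he2, hv2⟩ := ihz
        refine ⟨f1 * f2, g1 * g2, mul_mem hf1A hf2A, mul_mem hg1A hg2A,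
          mul_ne_zero hf10 hf20, mul_ne_zero hg10 hg20, ?_, ?_⟩
        · rw [map_add]
          show ((Additive.toMul (φ y + φ z) : Kˣ) : K) * am (g1 * g2) = am (f1 * f2)
          rw [toMul_add, Units.val_mul, map_mul, map_mul]
          rw [← he1, ← he2]; ring
        · rw [hvt_mul f1 f2 hf10 hf20, hvt_mul g1 g2 hg10 hg20]
          rw [Submodule.coe_add, ← hv1, ← hv2]; abel
    | smul k y hy ihy =>
        obtain ⟨f1, g1, hf1A, hg1A, hf10, hg10, he1, hv1⟩ := ihy
        obtain ⟨m, rfl | rfl⟩ := Int.eq_nat_or_neg k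
        · refine ⟨f1 ^ m, g1 ^ m, pow_mem hf1A m, pow_mem hg1A m, pow_ne_zero m hf10,
            pow_ne_zero m hg10, ?_, ?_⟩
          · rw [map_smul]
            show ((Additive.toMul ((↑m : ℤ) • φ y) : Kˣ) : K) * am (g1 ^ m) = am (f1 ^ m)
            rw [toMul_zsmul, zpow_natCast, Units.val_pow_eq_pow_val, map_pow, map_pow,
              ← mul_pow, he1]
          · rw [vt_pow' hvt_mul f1 hf10 m, vt_pow' hvt_mul g1 hg10 m, ← smul_sub, hv1,
              Submodule.coe_smul, natCast_zsmul]
        · refine ⟨g1 ^ m, f1 ^ m, pow_mem hg1A m, pow_mem hf1A m, pow_ne_zero m hg10,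
            pow_ne_zero m hf10, ?_, ?_⟩
          · rw [map_smul]
            show ((Additive.toMul ((-(↑m) : ℤ) • φ y) : Kˣ) : K) * am (f1 ^ m) = am (g1 ^ m)
            rw [toMul_zsmul, zpow_neg, zpow_natCast, Units.val_inv_eq_inv_val,
              Units.val_pow_eq_pow_val, map_pow, map_pow]
            have h2 : ((Additive.toMul (φ y) : Kˣ) : K) ^ m * (am g1) ^ m = (am f1) ^ m := by
              rw [← mul_pow, he1]
            rw [← h2]
            exact inv_mul_cancel_left₀ (pow_ne_zero m (Units.ne_zero _)) _
          · rw [vt_pow' hvt_mul f1 hf10 m, vt_pow' hvt_mul g1 hg10 m]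
            rw [Submodule.coe_smul, neg_smul, natCast_zsmul, ← hv1, smul_sub, neg_sub]
  -- representatives a, b for each s ∈ S
  choose aP bP haA hbA ha0 hb0 heqP hvab using fun s : ↥S => hrepN ⟨↑s, hSN s⟩
  have hUadd : ∀ s t : ↥S,
      (Additive.toMul (φ ⟨↑(s + t), hSN (s + t)⟩) : Kˣ) =
        Additive.toMul (φ ⟨↑s, hSN s⟩) * Additive.toMul (φ ⟨↑t, hSN t⟩) := by
    intro s t
    have hst : (⟨↑(s + t), hSN (s + t)⟩ : ↥N) = ⟨↑s, hSN s⟩ + ⟨↑t, hSN t⟩ := Subtype.ext rfl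
    rw [hst, map_add, toMul_add]
  have cross : ∀ s t : ↥S, aP s * aP t * bP (s + t) = aP (s + t) * (bP s * bP t) := by
    intro s t
    apply ham_inj
    have h1 := heqP s
    have h2 := heqP t
    have h3 := heqP (s + t)
    have h4 : ((Additive.toMul (φ ⟨↑(s + t), hSN (s + t)⟩) : Kˣ) : K) =
        ((Additive.toMul (φ ⟨↑s, hSN s⟩) : Kˣ) : K) *
          ((Additive.toMul (φ ⟨↑t, hSN t⟩) : Kˣ) : K) := by
      rw [hUadd s t, Units.val_mul]
    show am (aP s * aP t * bP (s + t)) = am (aP (s + t) * (bP s * bP t))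
    rw [map_mul, map_mul, map_mul, map_mul, ← h1, ← h2, ← h3, h4]
    ring
  -- normalized representatives Q s with multiplicative leading terms
  have hvtaP : ∀ s : ↥S, vt (aP s) = ↑s + vt (bP s) := fun s => sub_eq_iff_eq_add.mp (hvab s)
  have hQex : ∀ s : ↥S, ∃ c : ℂ, c ≠ 0 ∧ HiVal vt (vt (aP s)) (aP s - (c • p s) * bP s) := by
    intro s
    have h1 : vt (p s * bP s) = vt (aP s) := by
      rw [hvt_mul _ _ (hp0 s) (hb0 s), hpv s, hvtaP s]
    obtain ⟨c, hc0, hc⟩ := vt_leaves' hvt hv_leaves (mul_ne_zero (hp0 s) (hb0 s)) (ha0 s) h1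
    refine ⟨c, hc0, ?_⟩
    unfold HiVal
    rw [smul_mul_assoc]
    exact hc
  choose cQ hcQ0 hQr using hQex
  set Q : ↥S → Polynomial F := fun s => cQ s • p s with hQdef
  have hQA : ∀ s, Q s ∈ A := fun s => A.smul_mem (hpA s) (cQ s)
  have hQ0 : ∀ s, Q s ≠ 0 := by
    intro s h
    apply hp0 s
    have h2 : (cQ s)⁻¹ • (cQ s • p s) = 0 := by
      rw [show cQ s • p s = Q s from rfl, h, smul_zero]
    rwa [smul_smul, inv_mul_cancel₀ (hcQ0 s), one_smul] at h2
  have hQv : ∀ s, vt (Q s) = ↑s := fun s => by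
    show vt (cQ s • p s) = ↑s
    rw [hvt_smul _ _ (hcQ0 s) (hp0 s), hpv s]
  have hQb : ∀ s : ↥S, HiVal vt (vt (aP s)) (aP s - Q s * bP s) := hQr
  -- the key multiplicativity of leading terms
  have hcoe_add : ∀ s t : ↥S,
      ((↑(s + t) : ℤ × Lex (Fin d → ℤ))) = ↑s + ↑t := fun s t => rfl
  have hQmul : ∀ s t : ↥S,
      HiVal vt (↑(s + t) : ℤ × Lex (Fin d → ℤ)) (Q s * Q t - Q (s + t)) := by
    intro s t
    by_cases hD0 : Q s * Q t - Q (s + t) = 0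
    · exact Or.inl hD0
    have hbst0 : bP s * bP t ≠ 0 := mul_ne_zero (hb0 s) (hb0 t)
    have hB0 : bP s * bP t * bP (s + t) ≠ 0 := mul_ne_zero hbst0 (hb0 (s + t))
    have hvB : vt (bP s * bP t * bP (s + t)) = vt (bP s) + vt (bP t) + vt (bP (s + t)) := by
      rw [hvt_mul _ _ hbst0 (hb0 (s + t)), hvt_mul _ _ (hb0 s) (hb0 t)]
    have key : HiVal vt ((↑(s + t) : ℤ × Lex (Fin d → ℤ)) + vt (bP s * bP t * bP (s + t)))
        ((Q s * Q t - Q (s + t)) * (bP s * bP t * bP (s + t))) := by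
      have hid : (Q s * Q t - Q (s + t)) * (bP s * bP t * bP (s + t)) =
          (aP (s + t) - Q (s + t) * bP (s + t)) * (bP s * bP t)
          - ((Q s * bP s) * bP (s + t)) * (aP t - Q t * bP t)
          - ((Q t * bP t) * bP (s + t)) * (aP s - Q s * bP s)
          - bP (s + t) * ((aP s - Q s * bP s) * (aP t - Q t * bP t)) := by
        linear_combination cross s t
      have h4 : HiVal vt (vt (aP (s + t)) + vt (bP s * bP t))
          ((aP (s + t) - Q (s + t) * bP (s + t)) * (bP s * bP t)) :=
        HiVal.mul_right hlt hvt_mul (hQb (s + t)) _ hbst0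
      have h1 : HiVal vt (vt (Q s * bP s * bP (s + t)) + vt (aP t))
          (((Q s * bP s) * bP (s + t)) * (aP t - Q t * bP t)) :=
        HiVal.mul_left hlt hvt_mul _
          (mul_ne_zero (mul_ne_zero (hQ0 s) (hb0 s)) (hb0 (s + t))) (hQb t)
      have h2 : HiVal vt (vt (Q t * bP t * bP (s + t)) + vt (aP s))
          (((Q t * bP t) * bP (s + t)) * (aP s - Q s * bP s)) :=
        HiVal.mul_left hlt hvt_mul _
          (mul_ne_zero (mul_ne_zero (hQ0 t) (hb0 t)) (hb0 (s + t))) (hQb s)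
      have h3 : HiVal vt (vt (bP (s + t)) + (vt (aP s) + vt (aP t)))
          (bP (s + t) * ((aP s - Q s * bP s) * (aP t - Q t * bP t))) :=
        HiVal.mul_left hlt hvt_mul _ (hb0 (s + t))
          (HiVal.mul_mul hlt hvt_mul (hQb s) (hQb t))
      have e4 : vt (aP (s + t)) + vt (bP s * bP t) =
          (↑(s + t) : ℤ × Lex (Fin d → ℤ)) + vt (bP s * bP t * bP (s + t)) := by
        rw [hvtaP (s + t), hvt_mul _ _ (hb0 s) (hb0 t), hvB]; abel
      have e1 : vt (Q s * bP s * bP (s + t)) + vt (aP t) =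
          (↑(s + t) : ℤ × Lex (Fin d → ℤ)) + vt (bP s * bP t * bP (s + t)) := by
        rw [hvt_mul _ _ (mul_ne_zero (hQ0 s) (hb0 s)) (hb0 (s + t)),
          hvt_mul _ _ (hQ0 s) (hb0 s), hQv s, hvtaP t, hvB, hcoe_add]
        abel
      have e2 : vt (Q t * bP t * bP (s + t)) + vt (aP s) =
          (↑(s + t) : ℤ × Lex (Fin d → ℤ)) + vt (bP s * bP t * bP (s + t)) := by
        rw [hvt_mul _ _ (mul_ne_zero (hQ0 t) (hb0 t)) (hb0 (s + t)),
          hvt_mul _ _ (hQ0 t) (hb0 t), hQv t, hvtaP s, hvB, hcoe_add]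
        abel
      have e3 : vt (bP (s + t)) + (vt (aP s) + vt (aP t)) =
          (↑(s + t) : ℤ × Lex (Fin d → ℤ)) + vt (bP s * bP t * bP (s + t)) := by
        rw [hvtaP s, hvtaP t, hvB, hcoe_add]; abel
      rw [hid]
      exact HiVal.sub hvt_min hvt_smul
        (HiVal.sub hvt_min hvt_smul
          (HiVal.sub hvt_min hvt_smul (h4.congr e4) (h1.congr e1)) (h2.congr e2))
        (h3.congr e3)
    have hkey := key.resolve_left (mul_ne_zero hD0 hB0)
    rw [hvt_mul _ _ hD0 hB0] at hkey
    exact Or.inr (extLt_of_add_right hlt hkey)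
  -- the leaves are one-dimensional, spanned by the class of Q s
  have hmk0 : ∀ (γ : ℤ × Lex (Fin d → ℤ)) (x : ↥(filtAt A vt hvt_min hvt_smul γ)),
      (Submodule.Quotient.mk x : grQuot A vt hvt_min hvt_smul γ) = 0 ↔
        HiVal vt γ ((x : ↥A) : Polynomial F) := by
    intro γ x
    rw [Submodule.Quotient.mk_eq_zero]
    exact Iff.rfl
  have hQfilt : ∀ s : ↥S, (⟨Q s, hQA s⟩ : ↥A) ∈ filtAt A vt hvt_min hvt_smul ↑s := by
    intro s
    have h1 : extLe (↑s : ℤ × Lex (Fin d → ℤ)) (vt (Q s)) := by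
      rw [hQv s]; exact extLe_refl _
    exact Or.inr h1
  let qcl : ∀ s : ↥S, grQuot A vt hvt_min hvt_smul ↑s := fun s =>
    Submodule.Quotient.mk ⟨⟨Q s, hQA s⟩, hQfilt s⟩
  have hscale : ∀ (c : ℂ) (s : ↥S), c ≠ 0 → ¬ HiVal vt (↑s) (c • Q s) := by
    intro c s hc0 hcon
    have hcq0 : c • Q s ≠ 0 := by
      intro h
      apply hQ0 s
      have h2 : c⁻¹ • (c • Q s) = 0 := by rw [h, smul_zero]
      rwa [smul_smul, inv_mul_cancel₀ hc0, one_smul] at h2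
    have h3 := hcon.resolve_left hcq0
    rw [hvt_smul c (Q s) hc0 (hQ0 s), hQv s] at h3
    exact extLt_irrefl _ h3
  have hinj : ∀ s : ↥S,
      Function.Injective (LinearMap.toSpanSingleton ℂ _ (qcl s)) := by
    intro s c1 c2 hc
    by_contra hne
    rw [LinearMap.toSpanSingleton_apply, LinearMap.toSpanSingleton_apply] at hc
    have hsub : (c1 - c2) • qcl s = 0 := by rw [sub_smul, hc, sub_self]
    have hmk : ((c1 - c2) • qcl s : grQuot A vt hvt_min hvt_smul ↑s) =
        Submodule.Quotient.mk ((c1 - c2) • ⟨⟨Q s, hQA s⟩, hQfilt s⟩) :=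
      (Submodule.Quotient.mk_smul _ _ _).symm
    rw [hmk, hmk0] at hsub
    exact hscale (c1 - c2) s (sub_ne_zero_of_ne hne) hsub
  have hsurjc : ∀ s : ↥S,
      Function.Surjective (LinearMap.toSpanSingleton ℂ _ (qcl s)) := by
    intro s y
    obtain ⟨x, rfl⟩ := Submodule.Quotient.mk_surjective _ y
    have hx : ((x : ↥A) : Polynomial F) = 0 ∨
        extLe (↑s) (vt ((x : ↥A) : Polynomial F)) := x.2
    by_cases hf0 : ((x : ↥A) : Polynomial F) = 0
    · exact ⟨0, by rw [map_zero]; exact ((hmk0 _ x).mpr (Or.inl hf0)).symm⟩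
    have hle : extLe (↑s) (vt ((x : ↥A) : Polynomial F)) := hx.resolve_left hf0
    by_cases hfs : vt ((x : ↥A) : Polynomial F) = ↑s
    · obtain ⟨c, hc0, hc⟩ := vt_leaves' hvt hv_leaves (hQ0 s) hf0 (by rw [hQv s, hfs])
      refine ⟨c, ?_⟩
      rw [LinearMap.toSpanSingleton_apply]
      have hq : (c • qcl s : grQuot A vt hvt_min hvt_smul ↑s) =
          Submodule.Quotient.mk (c • ⟨⟨Q s, hQA s⟩, hQfilt s⟩) :=
        (Submodule.Quotient.mk_smul _ _ _).symm
      rw [hq]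
      symm
      rw [Submodule.Quotient.eq]
      rw [hfs] at hc
      exact hc
    · exact ⟨0, by
        rw [map_zero]
        exact ((hmk0 _ x).mpr
          (Or.inr (extLt_of_extLe_of_ne hle (fun h => hfs h.symm)))).symm⟩
  -- assemble the linear equivalence
  let ε : ∀ s : ↥S, ℂ ≃ₗ[ℂ] grQuot A vt hvt_min hvt_smul ↑s := fun s =>
    LinearEquiv.ofBijective (LinearMap.toSpanSingleton ℂ _ (qcl s)) ⟨hinj s, hsurjc s⟩
  let L : AddMonoidAlgebra ℂ ↥S ≃ₗ[ℂ] G :=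
    (AddMonoidAlgebra.coeffLinearEquiv ℂ).trans
      (((finsuppLEquivDirectSum ℂ ℂ ↥S).trans (DFinsupp.mapRange.linearEquiv ε)).trans e.symm)
  have hLsingle : ∀ (s : ↥S) (c : ℂ),
      L (AddMonoidAlgebra.single s c) =
        c • e.symm (DirectSum.of (fun s : ↥S => grQuot A vt hvt_min hvt_smul ↑s) s (qcl s)) := by
    intro s c
    show e.symm ((DFinsupp.mapRange.linearEquiv ε)
      ((finsuppLEquivDirectSum ℂ ℂ ↥S) (Finsupp.single s c))) = _
    rw [finsuppLEquivDirectSum_single]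
    rw [show (DirectSum.lof ℂ ↥S (fun _ : ↥S => ℂ) s c) = DFinsupp.single s c from rfl]
    rw [DFinsupp.mapRange.linearEquiv_apply, DFinsupp.mapRange_single]
    have hε : ε s c = c • qcl s := LinearMap.toSpanSingleton_apply ℂ _ (qcl s) c
    rw [hε]
    rw [show (DFinsupp.single s (c • qcl s) :
        DirectSum ↥S (fun s : ↥S => grQuot A vt hvt_min hvt_smul ↑s)) =
      DirectSum.lof ℂ ↥S (fun s : ↥S => grQuot A vt hvt_min hvt_smul ↑s) s (c • qcl s) from rfl]
    rw [map_smul, map_smul]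
    rfl
  have hQQfilt : ∀ s t : ↥S,
      (⟨Q s, hQA s⟩ : ↥A) * ⟨Q t, hQA t⟩ ∈ filtAt A vt hvt_min hvt_smul ↑(s + t) := by
    intro s t
    have hvv : extLe (↑(s + t) : ℤ × Lex (Fin d → ℤ)) (vt (Q s * Q t)) := by
      rw [hvt_mul _ _ (hQ0 s) (hQ0 t), hQv, hQv, ← hcoe_add s t]
      exact extLe_refl _
    exact Or.inr hvv
  have hmkQQ : ∀ s t : ↥S,
      (Submodule.Quotient.mk (⟨_, hQQfilt s t⟩ : ↥(filtAt A vt hvt_min hvt_smul ↑(s + t))) :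
        grQuot A vt hvt_min hvt_smul ↑(s + t)) = qcl (s + t) := by
    intro s t
    rw [Submodule.Quotient.eq]
    exact hQmul s t
  have hLmul : ∀ x y : AddMonoidAlgebra ℂ ↥S,
      L (@HMul.hMul _ _ _ (@instHMul _ AddMonoidAlgebra.instMul) x y) = L x * L y := by
    intro x y
    induction x using AddMonoidAlgebra.induction_linear with
    | zero => rw [zero_mul, map_zero, zero_mul]
    | add f g hf hg => rw [add_mul, map_add, map_add, add_mul, hf, hg]
    | single s c =>
      induction y using AddMonoidAlgebra.induction_linear with
      | zero => rw [mul_zero, map_zero, mul_zero]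
      | add f g hf hg => rw [mul_add, map_add, map_add, mul_add, hf, hg]
      | single t c' =>
        have hss : (@HMul.hMul _ _ _ (@instHMul _ AddMonoidAlgebra.instMul)
            (AddMonoidAlgebra.single s c) (AddMonoidAlgebra.single t c') : AddMonoidAlgebra ℂ ↥S) =
            AddMonoidAlgebra.single (s + t) (c * c') := AddMonoidAlgebra.single_mul_single ..
        rw [hss, hLsingle, hLsingle, hLsingle, smul_mul_smul_comm]
        congr 1
        rw [he_mul s t ⟨Q s, hQA s⟩ ⟨Q t, hQA t⟩ (hQfilt s) (hQfilt t) (hQQfilt s t)]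
        rw [hmkQQ s t]
  have hL1 : L 1 = 1 := by
    have h1g : ∀ g : G, L 1 * g = g := by
      intro g
      obtain ⟨x, rfl⟩ := L.surjective g
      have h3 := hLmul 1 x
      rw [one_mul] at h3
      rw [← h3]
    have h2 := h1g 1
    rwa [mul_one] at h2
  exact ⟨(AlgEquiv.ofLinearEquiv L hL1 hLmul).symm⟩


end
end

section
/- Let F be a field containing ℂ, Γ a linearly ordered additive abelian group, and v : F∖{0} → Γ a valuation with one-dimensional leaves (with respect to the ℂ-vector space structure of F). Let A = ⊕_{k≥0} A_k be a graded ℂ-subalgebra of the polynomial ring F[t] such that each graded piece A_k is finite-dimensional over ℂ. Let ṽ : A∖{0} → ℤ × Γ be the extended valuation ṽ(∑_{i≤s} f_i t^i) = (s, v(f_s)) (f_s ≠ 0 the top coefficient), where ℤ × Γ is ordered by (k,x) > (ℓ,y) iff k < ℓ, or k = ℓ and x > y. Suppose f₁, …, f_t ∈ A∖{0} are such that ṽ(f₁), …, ṽ(f_t) generate the value semigroup S(A, ṽ) = {ṽ(f) : f ∈ A∖{0}} (every element of S(A, ṽ) is a finite sum, with repetitions allowed, of the ṽ(f_i)). Then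 f₁, …, f_t generate A as a ℂ-algebra; that is, every element of A is a polynomial with ℂ-coefficients in f₁, …, f_t. -/
/-- The `k`-th graded piece of a graded subalgebra `A ⊆ F[t]`: the space of elements `x ∈ F`
such that `x·t^k ∈ A`. -/
def gradedPiece {F : Type*} [Field F] [Algebra ℂ F]
    (A : Subalgebra ℂ (Polynomial F)) (k : ℕ) : Submodule ℂ F where
  carrier := {x : F | Polynomial.C x * Polynomial.X ^ k ∈ A}
  add_mem' := by
    intro a b ha hb
    rw [Set.mem_setOf_eq, map_add, add_mul]
    exact add_mem ha hb
  zero_mem' := by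
    simp only [Set.mem_setOf_eq, map_zero, zero_mul]
    exact zero_mem A
  smul_mem' := by
    intro c x hx
    rw [Set.mem_setOf_eq, ← Polynomial.smul_C, smul_mul_assoc]
    exact A.smul_mem hx c

/-- The filtered subspace of the `k`-th graded piece consisting of `0` together with all
elements of value at least `γ`. -/
def filtSub {F : Type*} [Field F] [Algebra ℂ F] {Γ : Type*} [AddCommGroup Γ] [LinearOrder Γ] [IsOrderedAddMonoid Γ]
    (v : F → Γ)
    (hv_add : ∀ f g : F, f ≠ 0 → g ≠ 0 → f + g ≠ 0 → min (v f) (v g) ≤ v (f + g))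
    (hv_smul : ∀ (c : ℂ) (f : F), c ≠ 0 → f ≠ 0 → v (c • f) = v f)
    (A : Subalgebra ℂ (Polynomial F)) (k : ℕ) (γ : Γ) : Submodule ℂ F where
  carrier := {x | x ∈ gradedPiece A k ∧ (x = 0 ∨ γ ≤ v x)}
  add_mem' := by
    rintro a b ⟨haA, ha⟩ ⟨hbA, hb⟩
    refine ⟨add_mem haA hbA, ?_⟩
    rcases eq_or_ne a 0 with h0 | h0
    · subst h0; simpa using hb
    rcases eq_or_ne b 0 with h1 | h1
    · subst h1; simpa using ha
    rcases ha with ha | ha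
    · exact absurd ha h0
    rcases hb with hb | hb
    · exact absurd hb h1
    by_cases hab : a + b = 0
    · exact Or.inl hab
    · exact Or.inr (le_trans (le_min ha hb) (hv_add a b h0 h1 hab))
  zero_mem' := ⟨zero_mem _, Or.inl rfl⟩
  smul_mem' := by
    rintro c x ⟨hxA, hx⟩
    refine ⟨Submodule.smul_mem _ _ hxA, ?_⟩
    rcases eq_or_ne c 0 with hc | hc
    · subst hc; exact Or.inl (zero_smul _ _)
    rcases eq_or_ne x 0 with hx0 | hx0
    · subst hx0; exact Or.inl (smul_zero _)
    rcases hx with hx | hx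
    · exact absurd hx hx0
    · exact Or.inr (by rw [hv_smul c x hc hx0]; exact hx)

theorem mem_filtSub {F : Type*} [Field F] [Algebra ℂ F] {Γ : Type*}
    [AddCommGroup Γ] [LinearOrder Γ] [IsOrderedAddMonoid Γ] {v : F → Γ}
    {hv_add : ∀ f g : F, f ≠ 0 → g ≠ 0 → f + g ≠ 0 → min (v f) (v g) ≤ v (f + g)}
    {hv_smul : ∀ (c : ℂ) (f : F), c ≠ 0 → f ≠ 0 → v (c • f) = v f}
    {A : Subalgebra ℂ (Polynomial F)} {k : ℕ} {γ : Γ} {x : F} :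
    x ∈ filtSub v hv_add hv_smul A k γ ↔ x ∈ gradedPiece A k ∧ (x = 0 ∨ γ ≤ v x) :=
  Iff.rfl

/-- Let `F` be a field containing `ℂ`, `v` a valuation on `F` with
one-dimensional leaves, and `A = ⊕_k A_k` a graded `ℂ`-subalgebra of `F[t]` with
finite-dimensional graded pieces. Let `ṽ(∑ f_i t^i) = (s, v f_s)` be the extended valuation
(with values in `ℤ × Γ`, ordered by `(k,x) > (ℓ,y)` iff `k < ℓ`, or `k = ℓ` and `x > y`).
If `f 1, …, f t` are nonzero elements of `A` whose values generate the value semigroup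
`S(A, ṽ)`, then `f 1, …, f t` generate `A` as a `ℂ`-algebra. -/
theorem sagbi_generation_for_graded_algebras
    (F : Type*) [Field F] [Algebra ℂ F]
    (Γ : Type*) [AddCommGroup Γ] [LinearOrder Γ] [IsOrderedAddMonoid Γ]
    (v : F → Γ)
    (hv_add : ∀ f g : F, f ≠ 0 → g ≠ 0 → f + g ≠ 0 → min (v f) (v g) ≤ v (f + g))
    (hv_smul : ∀ (c : ℂ) (f : F), c ≠ 0 → f ≠ 0 → v (c • f) = v f)
    (hv_mul : ∀ f g : F, f ≠ 0 → g ≠ 0 → v (f * g) = v f + v g)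
    (hv_leaves : ∀ f g : F, f ≠ 0 → g ≠ 0 → v f = v g →
      ∃ c : ℂ, c ≠ 0 ∧ (g - c • f = 0 ∨ v g < v (g - c • f)))
    (A : Subalgebra ℂ (Polynomial F))
    -- `A` is graded: it contains the homogeneous components of all its elements
    (hA_graded : ∀ p ∈ A, ∀ k : ℕ, Polynomial.C (p.coeff k) * Polynomial.X ^ k ∈ A)
    -- the graded pieces are finite-dimensional over `ℂ`
    (hA_findim : ∀ k : ℕ, FiniteDimensional ℂ ↥(gradedPiece A k))
    -- the extended valuation `ṽ`
    (vt : Polynomial F → ℤ × Γ)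
    (hvt : ∀ p : Polynomial F, p ≠ 0 → vt p = ((p.natDegree : ℤ), v p.leadingCoeff))
    (t : ℕ) (f : Fin t → Polynomial F)
    (hfA : ∀ i, f i ∈ A) (hf_ne : ∀ i, f i ≠ 0)
    -- the values `ṽ (f i)` generate the value semigroup `S(A, ṽ)`
    (hgen : ∀ p ∈ A, p ≠ 0 → ∃ m : Fin t → ℕ, vt p = ∑ i, m i • vt (f i)) :
    A ≤ Algebra.adjoin ℂ (Set.range f) := by
  classical
  -- basic valuation facts
  have hv_one : v 1 = 0 := by
    have h := hv_mul 1 1 one_ne_zero one_ne_zero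
    rw [mul_one] at h
    have h2 : v 1 + 0 = v 1 + v 1 := by rw [add_zero]; exact h
    exact (add_left_cancel h2).symm
  have hv_pow : ∀ (x : F) (n : ℕ), x ≠ 0 → v (x ^ n) = n • v x := by
    intro x n hx
    induction n with
    | zero => simpa using hv_one
    | succ n ih =>
      rw [pow_succ, hv_mul _ _ (pow_ne_zero _ hx) hx, ih, succ_nsmul]
  have hlead_ne : ∀ i, (f i).leadingCoeff ≠ 0 :=
    fun i => Polynomial.leadingCoeff_ne_zero.mpr (hf_ne i)
  -- the main induction
  have key : ∀ k n : ℕ, ∀ p : Polynomial F, p ∈ A → p ≠ 0 → p.natDegree ≤ k →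
      Module.finrank ℂ (filtSub v hv_add hv_smul A p.natDegree (v p.leadingCoeff)) ≤ n →
      p ∈ Algebra.adjoin ℂ (Set.range f) := by
    intro k
    induction k using Nat.strong_induction_on with
    | _ k ihk =>
    intro n
    induction n using Nat.strong_induction_on with
    | _ n ihn =>
    intro p hpA hp hdk hrank
    have hplead : p.leadingCoeff ≠ 0 := Polynomial.leadingCoeff_ne_zero.mpr hp
    obtain ⟨m, hm⟩ := hgen p hpA hp
    set d := p.natDegree with hd
    set q : Polynomial F := ∏ i, f i ^ m i with hqdef
    have hq0 : q ≠ 0 := Finset.prod_ne_zero_iff.mpr fun i _ => pow_ne_zero _ (hf_ne i)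
    have hqlead_ne : q.leadingCoeff ≠ 0 := Polynomial.leadingCoeff_ne_zero.mpr hq0
    -- decompose the semigroup relation into components
    have hm' : ((d : ℤ), v p.leadingCoeff)
        = ∑ i, m i • (((f i).natDegree : ℤ), v (f i).leadingCoeff) := by
      rw [← hvt p hp, hm]
      exact Finset.sum_congr rfl fun i _ => by rw [hvt (f i) (hf_ne i)]
    have h1 : (d : ℤ) = ∑ i, (m i : ℤ) * ((f i).natDegree : ℤ) := by
      have h := congrArg Prod.fst hm'
      simpa [Prod.fst_sum, nsmul_eq_mul] using h
    have h2 : v p.leadingCoeff = ∑ i, m i • v (f i).leadingCoeff := by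
      have h := congrArg Prod.snd hm'
      simpa [Prod.snd_sum] using h
    have h1' : d = ∑ i, m i * (f i).natDegree := by exact_mod_cast h1
    -- degree and leading coefficient of q
    have hdq : q.natDegree = d := by
      rw [hqdef, Polynomial.natDegree_prod _ _ (fun i _ => pow_ne_zero _ (hf_ne i))]
      rw [h1']
      exact Finset.sum_congr rfl fun i _ => by rw [Polynomial.natDegree_pow]
    have hqleadeq : q.leadingCoeff = ∏ i, (f i).leadingCoeff ^ m i := by
      rw [hqdef, Polynomial.leadingCoeff_prod]
      exact Finset.prod_congr rfl fun i _ => Polynomial.leadingCoeff_pow _ _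
    have hv_prod : ∀ s : Finset (Fin t),
        v (∏ i ∈ s, (f i).leadingCoeff ^ m i) = ∑ i ∈ s, m i • v (f i).leadingCoeff := by
      intro s
      induction s using Finset.induction_on with
      | empty => simpa using hv_one
      | insert _ _ hnot ih =>
        rw [Finset.prod_insert hnot, Finset.sum_insert hnot,
          hv_mul _ _ (pow_ne_zero _ (hlead_ne _))
            (Finset.prod_ne_zero_iff.mpr fun i _ => pow_ne_zero _ (hlead_ne i)),
          hv_pow _ _ (hlead_ne _), ih]
    have hveq : v q.leadingCoeff = v p.leadingCoeff := by
      rw [hqleadeq, hv_prod Finset.univ, h2]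
    obtain ⟨c, hc0, hcase⟩ := hv_leaves q.leadingCoeff p.leadingCoeff hqlead_ne hplead hveq
    set a : F := algebraMap ℂ F c with hadef
    have hsmul_eq : ∀ x : F, c • x = a * x := fun x => Algebra.smul_def c x
    set r : Polynomial F := p - Polynomial.C a * q with hrdef
    have hqadj : q ∈ Algebra.adjoin ℂ (Set.range f) :=
      Subalgebra.prod_mem _ fun i _ => pow_mem (Algebra.subset_adjoin (Set.mem_range_self i)) _
    have hqA : q ∈ A := Subalgebra.prod_mem _ fun i _ => pow_mem (hfA i) _
    have hCa_adj : ∀ S : Subalgebra ℂ (Polynomial F), Polynomial.C a ∈ S := by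
      intro S
      have : Polynomial.C a = algebraMap ℂ (Polynomial F) c := by
        rw [hadef]; rfl
      rw [this]
      exact Subalgebra.algebraMap_mem S c
    have hcqadj : Polynomial.C a * q ∈ Algebra.adjoin ℂ (Set.range f) :=
      mul_mem (hCa_adj _) hqadj
    have hrA : r ∈ A := A.sub_mem hpA (A.mul_mem (hCa_adj A) hqA)
    have hpr : p = r + Polynomial.C a * q := by rw [hrdef, sub_add_cancel]
    have hco : r.coeff d = p.leadingCoeff - c • q.leadingCoeff := by
      have e1 : p.coeff d = p.leadingCoeff := by rw [hd, Polynomial.coeff_natDegree]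
      have e2 : q.coeff d = q.leadingCoeff := by rw [← hdq, Polynomial.coeff_natDegree]
      rw [hrdef, Polynomial.coeff_sub, Polynomial.coeff_C_mul, e1, e2, hsmul_eq]
    have hrd : r.natDegree ≤ d := by
      refine le_trans (Polynomial.natDegree_sub_le _ _) (max_le le_rfl ?_)
      exact le_trans (Polynomial.natDegree_C_mul_le _ _) hdq.le
    by_cases hz : p.leadingCoeff - c • q.leadingCoeff = 0
    · -- the leading term cancels completely: degree drops
      by_cases hr0 : r = 0
      · have hpq : p = Polynomial.C a * q := by
          have h := hr0
          rw [hrdef, sub_eq_zero] at h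
          exact h
        rw [hpq]; exact hcqadj
      · have hne : r.natDegree ≠ d := by
          intro h
          apply hr0
          apply Polynomial.leadingCoeff_eq_zero.mp
          rw [Polynomial.leadingCoeff, h, hco]
          exact hz
        have hlt : r.natDegree < d := lt_of_le_of_ne hrd hne
        have hradj := ihk r.natDegree (lt_of_lt_of_le hlt hdk)
          (Module.finrank ℂ (filtSub v hv_add hv_smul A r.natDegree (v r.leadingCoeff)))
          r hrA hr0 le_rfl le_rfl
        rw [hpr]; exact add_mem hradj hcqadj
    · -- same degree, but the value of the leading coefficient strictly increases
      have hineq : v p.leadingCoeff < v (p.leadingCoeff - c • q.leadingCoeff) :=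
        hcase.resolve_left hz
      have hr0 : r ≠ 0 := by
        intro h
        apply hz
        rw [← hco, h, Polynomial.coeff_zero]
      have hdr : r.natDegree = d :=
        le_antisymm hrd (Polynomial.le_natDegree_of_ne_zero (by rw [hco]; exact hz))
      have hrlead : r.leadingCoeff = p.leadingCoeff - c • q.leadingCoeff := by
        rw [Polynomial.leadingCoeff, hdr, hco]
      have hvlt : v p.leadingCoeff < v r.leadingCoeff := by rw [hrlead]; exact hineq
      have hmemp : p.leadingCoeff ∈ filtSub v hv_add hv_smul A d (v p.leadingCoeff) := by
        refine mem_filtSub.mpr ⟨?_, Or.inr le_rfl⟩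
        show Polynomial.C p.leadingCoeff * Polynomial.X ^ d ∈ A
        rw [← Polynomial.coeff_natDegree, ← hd]
        exact hA_graded p hpA d
      have hsub : filtSub v hv_add hv_smul A d (v r.leadingCoeff)
          < filtSub v hv_add hv_smul A d (v p.leadingCoeff) := by
        refine lt_of_le_of_ne ?_ ?_
        · intro x hx
          obtain ⟨hxA, hx2⟩ := mem_filtSub.mp hx
          exact mem_filtSub.mpr ⟨hxA, hx2.imp id fun h => le_trans hvlt.le h⟩
        · intro hEq
          have hmem : p.leadingCoeff ∈ filtSub v hv_add hv_smul A d (v r.leadingCoeff) :=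
            hEq ▸ hmemp
          rcases (mem_filtSub.mp hmem).2 with h | h
          · exact hplead h
          · exact absurd h (not_le.mpr hvlt)
      haveI := hA_findim d
      haveI : FiniteDimensional ℂ (filtSub v hv_add hv_smul A d (v p.leadingCoeff)) :=
        Submodule.finiteDimensional_of_le (fun x hx => (mem_filtSub.mp hx).1)
      have hrank' :
          Module.finrank ℂ (filtSub v hv_add hv_smul A d (v r.leadingCoeff)) < n :=
        lt_of_lt_of_le (Submodule.finrank_lt_finrank_of_lt hsub) hrank
      have hradj := ihn
        (Module.finrank ℂ (filtSub v hv_add hv_smul A d (v r.leadingCoeff))) hrank'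
        r hrA hr0 (hdr ▸ hdk) (by rw [hdr])
      rw [hpr]; exact add_mem hradj hcqadj
  -- conclude
  intro p hpA
  by_cases hp : p = 0
  · rw [hp]; exact zero_mem _
  · exact key p.natDegree
      (Module.finrank ℂ (filtSub v hv_add hv_smul A p.natDegree (v p.leadingCoeff)))
      p hpA hp le_rfl le_rfl
end
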